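/- The dihedral angles of the tetrahedron T2 with vertices (0,0,0), (2,2,-1), (2,-1,2), (1,-2,-2) equal π/2 at the three edges incident to the origin, and equal arccos(√3/3) = (π − arccos(1/3))/2 at the three remaining edges. -/

import Mathlib

open Real MeasureTheory
noncomputable section
abbrev E3 := EuclideanSpace ℝ (Fin 3)
/-- The point (a,b,c) in Euclidean 3-space. -/
def pt (a b c : ℝ) : E3 := WithLp.toLp 2 ![a, b, c]
/-- Dihedral angle of the tetrahedron `conv {a,b,c,d}` at the edge `[a,b]`:
the angle between the components of `c - a` and `d - a` orthogonal to `b - a`. -/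
def dihedral (a b c d : E3) : ℝ :=
  InnerProductGeometry.angle
    ((c - a) - ((inner ℝ (c - a) (b - a) : ℝ) / (inner ℝ (b - a) (b - a) : ℝ)) • (b - a))
    ((d - a) - ((inner ℝ (d - a) (b - a) : ℝ) / (inner ℝ (b - a) (b - a) : ℝ)) • (b - a))

lemma sub_pt (a b c d e f : ℝ) : pt a b c - pt d e f = pt (a-d) (b-e) (c-f) := by
  ext i; fin_cases i <;> simp [pt]

lemma smul_pt (r a b c : ℝ) : r • pt a b c = pt (r*a) (r*b) (r*c) := by
  ext i; fin_cases i <;> simp [pt]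

lemma inner_pt (a b c d e f : ℝ) : (inner ℝ (pt a b c) (pt d e f) : ℝ) = a*d + b*e + c*f := by
  simp [pt, PiLp.inner_apply, Fin.sum_univ_three, RCLike.inner_apply]; ring

lemma norm_pt (a b c : ℝ) : ‖pt a b c‖ = Real.sqrt (a^2+b^2+c^2) := by
  simp [pt, EuclideanSpace.norm_eq, Fin.sum_univ_three, sq_abs]

lemma angle_pt (x1 x2 x3 y1 y2 y3 : ℝ) :
    InnerProductGeometry.angle (pt x1 x2 x3) (pt y1 y2 y3) =
    Real.arccos ((x1*y1+x2*y2+x3*y3) /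
      (Real.sqrt (x1^2+x2^2+x3^2) * Real.sqrt (y1^2+y2^2+y3^2))) := by
  rw [InnerProductGeometry.angle, inner_pt, norm_pt, norm_pt]

lemma key_val : (9:ℝ) / 2 / (3 / √2 * (√27 / √2)) = √3 / 3 := by
  have h9 : √(9:ℝ) = 3 := by
    rw [show (9:ℝ) = 3^2 by norm_num, Real.sqrt_sq (by norm_num)]
  have h27 : √(27:ℝ) = 3 * √3 := by
    rw [show (27:ℝ) = 3^2 * 3 by norm_num, Real.sqrt_mul (by positivity),
      Real.sqrt_sq (by norm_num)]
  have h2 : √(2:ℝ) ≠ 0 := by positivity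
  have h3 : √(3:ℝ) ≠ 0 := by positivity
  have hs2 : √(2:ℝ) * √2 = 2 := Real.mul_self_sqrt (by norm_num)
  have hs3 : √(3:ℝ) * √3 = 3 := Real.mul_self_sqrt (by norm_num)
  rw [h27]
  field_simp
  nlinarith [hs2, hs3]

lemma key_trig : Real.arccos (Real.sqrt 3 / 3) = (Real.pi - Real.arccos (1/3)) / 2 := by
  set θ := Real.arccos (Real.sqrt 3 / 3) with hθ
  have hs3 : √(3:ℝ) * √3 = 3 := Real.mul_self_sqrt (by norm_num)
  have hge : (-1:ℝ) ≤ √3 / 3 := by nlinarith [Real.sqrt_nonneg 3]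
  have hle : √(3:ℝ) / 3 ≤ 1 := by nlinarith [hs3, Real.sqrt_nonneg 3]
  have h0 : 0 ≤ θ := Real.arccos_nonneg _
  have hhalf : θ ≤ π / 2 := by
    rw [hθ]; exact (Real.arccos_le_pi_div_two).2 (by positivity)
  have hc : Real.cos (2*θ) = -(1/3) := by
    rw [Real.cos_two_mul, hθ, Real.cos_arccos hge hle]
    nlinarith [hs3]
  have h2 := Real.arccos_cos (by linarith : (0:ℝ) ≤ 2*θ) (by linarith : 2*θ ≤ π)
  rw [hc, Real.arccos_neg] at h2
  linarith

theorem T2_dihedral_angles :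
    dihedral (pt 0 0 0) (pt 2 2 (-1)) (pt 2 (-1) 2) (pt 1 (-2) (-2)) = Real.pi / 2 ∧
    dihedral (pt 0 0 0) (pt 2 (-1) 2) (pt 2 2 (-1)) (pt 1 (-2) (-2)) = Real.pi / 2 ∧
    dihedral (pt 0 0 0) (pt 1 (-2) (-2)) (pt 2 2 (-1)) (pt 2 (-1) 2) = Real.pi / 2 ∧
    dihedral (pt 2 2 (-1)) (pt 2 (-1) 2) (pt 0 0 0) (pt 1 (-2) (-2)) = Real.arccos (Real.sqrt 3 / 3) ∧
    dihedral (pt 2 2 (-1)) (pt 1 (-2) (-2)) (pt 0 0 0) (pt 2 (-1) 2) = Real.arccos (Real.sqrt 3 / 3) ∧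
    dihedral (pt 2 (-1) 2) (pt 1 (-2) (-2)) (pt 0 0 0) (pt 2 2 (-1)) = Real.arccos (Real.sqrt 3 / 3) ∧
    Real.arccos (Real.sqrt 3 / 3) = (Real.pi - Real.arccos (1/3)) / 2 := by
  refine ⟨?_, ?_, ?_, ?_, ?_, ?_, key_trig⟩ <;>
  · unfold dihedral
    simp only [sub_pt, inner_pt, smul_pt]
    norm_num [angle_pt, Real.arccos_zero, key_val]
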